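/- In the Banach space ℓ1 of absolutely summable real sequences with standard basis vectors (e_n), let A = { (e_m − e_n)/2 : m, n ∈ ℕ, m < n }. Then the closure of A in the weak topology of ℓ1 equals A ∪ {0}, and every subset of A ∪ {0} that is compact in the weak topology of ℓ1 is finite. -/

import Mathlib

open Topology

/-- The Banach space `ℓ¹` of absolutely summable real sequences. -/
abbrev ell1 : Type := lp (fun _ : ℕ => ℝ) 1

/-- The `n`-th standard basis vector of `ℓ¹`. -/
noncomputable def e (n : ℕ) : ell1 := lp.single 1 n (1 : ℝ)

/-- The set `A = {(e_m - e_n)/2 : m < n}`, viewed inside `ℓ¹` with its weak topology. -/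
noncomputable def A : Set (WeakSpace ℝ ell1) :=
  {x | ∃ m n : ℕ, m < n ∧ (toWeakSpace ℝ ell1).symm x = (2 : ℝ)⁻¹ • (e m - e n)}
-- ### Auxiliary infrastructure ###
section Aux
open ENNReal Filter

lemma one_toReal_pos_aux : (0:ℝ) < ENNReal.toReal 1 := by norm_num

lemma summable_norm_coord (x : ell1) : Summable fun k => ‖x k‖ := by
  have h := (lp.memℓp x).summable one_toReal_pos_aux
  simpa [ENNReal.toReal_one, Real.rpow_one] using h

lemma summable_term (c : ℕ → ℝ) (hc : ∀ k, |c k| ≤ 1) (x : ell1) :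
    Summable fun k => c k * x k := by
  refine (summable_norm_coord x).of_norm_bounded (fun k => ?_)
  rw [norm_mul]
  calc ‖c k‖ * ‖x k‖ ≤ 1 * ‖x k‖ := by
        exact mul_le_mul_of_nonneg_right (hc k) (norm_nonneg _)
    _ = ‖x k‖ := one_mul _

/-- The continuous linear functional on `ℓ¹` given by pairing with a sequence
bounded by `1`. -/
noncomputable def F (c : ℕ → ℝ) (hc : ∀ k, |c k| ≤ 1) : ell1 →L[ℝ] ℝ :=
  LinearMap.mkContinuous
    { toFun := fun x => ∑' k, c k * x k
      map_add' := fun x y => by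
        simp only [lp.coeFn_add, Pi.add_apply, mul_add]
        exact Summable.tsum_add (summable_term c hc x) (summable_term c hc y)
      map_smul' := fun r x => by
        simp only [lp.coeFn_smul, Pi.smul_apply, smul_eq_mul, RingHom.id_apply]
        rw [← tsum_mul_left]
        congr 1; funext k; ring }
    1 (fun x => by
      simp only [LinearMap.coe_mk, AddHom.coe_mk, one_mul]
      calc ‖∑' k, c k * x k‖ ≤ ∑' k, ‖c k * x k‖ :=
            norm_tsum_le_tsum_norm ((summable_term c hc x).norm)
        _ ≤ ∑' k, ‖x k‖ := by
            refine Summable.tsum_le_tsum (fun k => ?_) (summable_term c hc x).norm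
              (summable_norm_coord x)
            rw [norm_mul]
            exact (mul_le_mul_of_nonneg_right (hc k) (norm_nonneg _)).trans
              (by rw [one_mul])
        _ = ‖x‖ := by
            rw [lp.norm_eq_tsum_rpow one_toReal_pos_aux x]
            simp [ENNReal.toReal_one, Real.rpow_one])

lemma F_apply (c : ℕ → ℝ) (hc : ∀ k, |c k| ≤ 1) (x : ell1) :
    F c hc x = ∑' k, c k * x k := rfl

lemma e_apply (m k : ℕ) : (e m : ∀ _ : ℕ, ℝ) k = if k = m then 1 else 0 := by
  simp [e, lp.single_apply, Pi.single_apply]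

lemma norm_e (m : ℕ) : ‖e m‖ = 1 := by
  have := lp.norm_single (E := fun _ : ℕ => ℝ) (p := 1) one_pos m (1:ℝ)
  simpa [e] using this

lemma F_e (c : ℕ → ℝ) (hc : ∀ k, |c k| ≤ 1) (m : ℕ) : F c hc (e m) = c m := by
  rw [F_apply]
  rw [tsum_eq_single m (fun k hk => by rw [e_apply, if_neg hk, mul_zero])]
  rw [e_apply, if_pos rfl, mul_one]

lemma F_pair (c : ℕ → ℝ) (hc : ∀ k, |c k| ≤ 1) (m n : ℕ) :
    F c hc ((2:ℝ)⁻¹ • (e m - e n)) = 2⁻¹ * (c m - c n) := by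
  rw [map_smul, map_sub, F_e, F_e, smul_eq_mul]

/-- The element `(e m - e n)/2` of the weak space. -/
noncomputable def φp (m n : ℕ) : WeakSpace ℝ ell1 :=
  toWeakSpace ℝ ell1 ((2 : ℝ)⁻¹ • (e m - e n))

lemma symm_φp (m n : ℕ) :
    (toWeakSpace ℝ ell1).symm (φp m n) = (2 : ℝ)⁻¹ • (e m - e n) :=
  LinearEquiv.symm_apply_apply _ _

lemma mem_A_iff (y : WeakSpace ℝ ell1) :
    y ∈ A ↔ ∃ m n : ℕ, m < n ∧ y = φp m n := by
  unfold A φp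
  constructor
  · rintro ⟨m, n, h, hy⟩
    exact ⟨m, n, h, by rw [← hy]; exact (LinearEquiv.apply_symm_apply _ _).symm⟩
  · rintro ⟨m, n, h, rfl⟩
    exact ⟨m, n, h, LinearEquiv.symm_apply_apply _ _⟩

lemma Fw_continuous (f : ell1 →L[ℝ] ℝ) :
    Continuous fun y : WeakSpace ℝ ell1 => f ((toWeakSpace ℝ ell1).symm y) :=
  WeakBilin.eval_continuous _ f

lemma Fw_mem (c : ℕ → ℝ) (hc : ∀ k, |c k| ≤ 1) {x : WeakSpace ℝ ell1}
    (hx : x ∈ closure A) {t : Set ℝ} (ht : t.Finite)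
    (h : ∀ m n : ℕ, m < n → F c hc ((2 : ℝ)⁻¹ • (e m - e n)) ∈ t) :
    F c hc ((toWeakSpace ℝ ell1).symm x) ∈ t := by
  have hmap : Set.MapsTo
      (fun y : WeakSpace ℝ ell1 => F c hc ((toWeakSpace ℝ ell1).symm y)) A t := by
    rintro y ⟨m, n, hmn, hy⟩
    simp only [hy]
    exact h m n hmn
  have := map_mem_closure (Fw_continuous (F c hc)) hx hmap
  rwa [ht.isClosed.closure_eq] at this

def sfun (m : ℕ) : ℕ → ℝ := fun k => if k = m then 1 else 0

lemma sfun_bd (m : ℕ) : ∀ k, |sfun m k| ≤ 1 := by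
  intro k; unfold sfun; split_ifs <;> norm_num

lemma one_bd : ∀ k : ℕ, |(fun _ : ℕ => (1:ℝ)) k| ≤ 1 := by intro k; norm_num

lemma sfun_add_bd {k l : ℕ} (h : k ≠ l) : ∀ j, |sfun k j + sfun l j| ≤ 1 := by
  intro j; unfold sfun; split_ifs with h1 h2 h2 <;> simp_all

lemma sfun_sub_bd (k l : ℕ) : ∀ j, |sfun k j - sfun l j| ≤ 1 := by
  intro j; unfold sfun; split_ifs <;> simp_all

lemma tsum_sfun (m : ℕ) (f : ℕ → ℝ) : ∑' j, sfun m j * f j = f m := by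
  rw [tsum_eq_single m (fun k hk => by rw [sfun, if_neg hk, zero_mul])]
  rw [sfun, if_pos rfl, one_mul]

lemma F_coord (k : ℕ) (x : ell1) : F (sfun k) (sfun_bd k) x = x k := by
  rw [F_apply, tsum_sfun]

lemma F_coord2 {k l : ℕ} (h : k ≠ l) (x : ell1) :
    F (fun j => sfun k j + sfun l j) (sfun_add_bd h) x = x k + x l := by
  rw [F_apply]
  have heq : (fun j => (sfun k j + sfun l j) * x j)
      = fun j => sfun k j * x j + sfun l j * x j := funext fun j => by ring
  rw [heq, Summable.tsum_add (summable_term _ (sfun_bd k) x) (summable_term _ (sfun_bd l) x),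
    tsum_sfun, tsum_sfun]

lemma F_coord_sub (k l : ℕ) (x : ell1) :
    F (fun j => sfun k j - sfun l j) (sfun_sub_bd k l) x = x k - x l := by
  rw [F_apply]
  have heq : (fun j => (sfun k j - sfun l j) * x j)
      = fun j => sfun k j * x j - sfun l j * x j := funext fun j => by ring
  rw [heq, Summable.tsum_sub (summable_term _ (sfun_bd k) x) (summable_term _ (sfun_bd l) x),
    tsum_sfun, tsum_sfun]

lemma F_one (x : ell1) : F (fun _ => 1) one_bd x = ∑' k, x k := by
  rw [F_apply]; simp

end Aux
lemma closure_A_subset : closure A ⊆ A ∪ {0} := by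
  intro x hx
  set x' := (toWeakSpace ℝ ell1).symm x with hxdef
  have tfin : ({-2⁻¹, 0, 2⁻¹} : Set ℝ).Finite := (Set.finite_singleton _).insert _ |>.insert _
  -- coordinates take values in {-1/2, 0, 1/2}
  have h1 : ∀ k, x' k = -2⁻¹ ∨ x' k = 0 ∨ x' k = 2⁻¹ := by
    intro k
    have := Fw_mem (sfun k) (sfun_bd k) hx tfin (fun m n hmn => by
      rw [F_pair]; unfold sfun
      split_ifs with hm hn hn
      · exact absurd (hm.trans hn.symm) hmn.ne
      all_goals norm_num)
    rw [F_coord] at this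
    simpa using this
  -- no two coordinates both 1/2 (or both -1/2)
  have h2 : ∀ k l, k ≠ l → x' k + x' l = -1 ∨ x' k + x' l = 1 → False := by
    intro k l hkl hsum
    have := Fw_mem _ (sfun_add_bd hkl) hx tfin (fun m n hmn => by
      rw [F_pair]; unfold sfun
      split_ifs <;> simp_all <;> norm_num)
    rw [F_coord2 hkl] at this
    rcases hsum with h | h <;> rw [h] at this <;> simp only [Set.mem_insert_iff, Set.mem_singleton_iff] at this <;> rcases this with h' | h' | h' <;> norm_num at h'
  -- order constraint
  have h3 : ∀ m n, x' m = 2⁻¹ → x' n = -2⁻¹ → m < n := by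
    intro m n hm hn
    have hmn : m ≠ n := fun h => by rw [h, hn] at hm; norm_num at hm
    by_contra hcon
    have hnm : n < m := by omega
    have tfin' : ({-1, -2⁻¹, 0, 2⁻¹} : Set ℝ).Finite :=
      ((Set.finite_singleton _).insert _ |>.insert _).insert _
    have := Fw_mem _ (sfun_sub_bd m n) hx tfin' (fun i j hij => by
      rw [F_pair]; unfold sfun
      split_ifs with a b c d <;> first
        | omega
        | (simp_all; try norm_num)
      all_goals norm_num)
    rw [F_coord_sub, hm, hn] at this
    norm_num at this
  have h0 : ∑' k, x' k = 0 := by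
    have := Fw_mem _ one_bd hx (Set.finite_singleton (0:ℝ)) (fun m n hmn => by
      rw [F_pair]; norm_num)
    rw [F_one] at this
    simpa using this
  -- uniqueness of positive / negative coordinate
  have hP : ∀ k l, x' k = 2⁻¹ → x' l = 2⁻¹ → k = l := by
    intro k l hk hl
    by_contra hkl
    exact h2 k l hkl (Or.inr (by rw [hk, hl]; norm_num))
  have hN : ∀ k l, x' k = -2⁻¹ → x' l = -2⁻¹ → k = l := by
    intro k l hk hl
    by_contra hkl
    exact h2 k l hkl (Or.inl (by rw [hk, hl]; norm_num))
  -- finite support / tsum computations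
  have hone : (0:ℝ) < 2⁻¹ := by norm_num
  by_cases hPex : ∃ m, x' m = 2⁻¹
  · obtain ⟨m, hm⟩ := hPex
    by_cases hNex : ∃ n, x' n = -2⁻¹
    · obtain ⟨n, hn⟩ := hNex
      have hmn : m < n := h3 m n hm hn
      refine Or.inl ⟨m, n, hmn, ?_⟩
      rw [← hxdef]
      apply lp.ext
      funext k
      have hrhs : (((2:ℝ)⁻¹ • (e m - e n) : ell1) : ∀ _ : ℕ, ℝ) k
          = 2⁻¹ * ((e m : ∀ _ : ℕ, ℝ) k - (e n : ∀ _ : ℕ, ℝ) k) := by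
        rw [lp.coeFn_smul, lp.coeFn_sub]; simp
      rw [hrhs, e_apply, e_apply]
      by_cases hk : k = m
      · subst hk
        rw [if_pos rfl, if_neg (fun hh : k = n => hmn.ne (hh ▸ rfl)), hm]
        norm_num
      · by_cases hk' : k = n
        · subst hk'
          rw [if_neg hk, if_pos rfl, hn]
          norm_num
        · rw [if_neg hk, if_neg hk']
          have hk0 : x' k = 0 := by
            rcases h1 k with h|h|h
            · exact absurd (hN k n h hn) hk'
            · exact h
            · exact absurd (hP k m h hm) hk
          rw [hk0]; norm_num
    · exfalso
      have htot : ∑' k, x' k = x' m := tsum_eq_single m (fun k hk => by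
        rcases h1 k with h|h|h
        · exact absurd ⟨k, h⟩ hNex
        · exact h
        · exact absurd (hP k m h hm) hk)
      rw [h0, hm] at htot
      norm_num at htot
  · by_cases hNex : ∃ n, x' n = -2⁻¹
    · obtain ⟨n, hn⟩ := hNex
      exfalso
      have htot : ∑' k, x' k = x' n := tsum_eq_single n (fun k hk => by
        rcases h1 k with h|h|h
        · exact absurd (hN k n h hn) hk
        · exact h
        · exact absurd ⟨k, h⟩ hPex)
      rw [h0, hn] at htot
      norm_num at htot
    · refine Or.inr ?_
      have hx0 : x' = 0 := by
        apply lp.ext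
        funext k
        have : x' k = 0 := by
          rcases h1 k with h|h|h
          · exact absurd ⟨k, h⟩ hNex
          · exact h
          · exact absurd ⟨k, h⟩ hPex
        simpa using this
      show x ∈ ({0} : Set (WeakSpace ℝ ell1))
      rw [Set.mem_singleton_iff]
      calc x = toWeakSpace ℝ ell1 x' := ((toWeakSpace ℝ ell1).apply_symm_apply x).symm
        _ = 0 := by rw [hx0]; exact map_zero _

lemma pigeonhole (s : Finset (ell1 →L[ℝ] ℝ)) {r : ℝ} (hr : 0 < r) :
    ∃ m n : ℕ, m < n ∧ ∀ g ∈ s, ‖g (e m) - g (e n)‖ < r := by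
  classical
  set v : ℕ → (↥s → ℝ) := fun k g => g.1 (e k) with hv
  set K := Set.pi Set.univ fun g : ↥s => Set.Icc (-‖g.1‖) ‖g.1‖ with hKdef
  have hK : IsCompact K := isCompact_univ_pi fun g => isCompact_Icc
  have hmem : ∀ k, v k ∈ K := by
    intro k g _
    have h1 : ‖g.1 (e k)‖ ≤ ‖g.1‖ := by
      have := g.1.le_opNorm (e k); rwa [norm_e, mul_one] at this
    rw [Real.norm_eq_abs] at h1
    exact abs_le.mp h1
  obtain ⟨x, -, ψ, hψ, hlim⟩ := hK.tendsto_subseq hmem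
  obtain ⟨N, hN⟩ := (Metric.tendsto_atTop.mp hlim) (r / 2) (by positivity)
  refine ⟨ψ N, ψ (N + 1), hψ (Nat.lt_succ_self N), fun g hg => ?_⟩
  have h1 := hN N le_rfl
  have h2 := hN (N + 1) (Nat.le_succ N)
  have hd : dist (v (ψ N)) (v (ψ (N + 1))) < r := by
    calc dist (v (ψ N)) (v (ψ (N + 1))) ≤ dist (v (ψ N)) x + dist (v (ψ (N+1))) x :=
          dist_triangle_right _ _ _
      _ < r / 2 + r / 2 := add_lt_add h1 h2
      _ = r := by ring
  have := (dist_le_pi_dist (v (ψ N)) (v (ψ (N + 1))) ⟨g, hg⟩).trans_lt hd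
  simpa [v, Real.dist_eq, Real.norm_eq_abs] using this
lemma zero_mem_closure_A : (0 : WeakSpace ℝ ell1) ∈ closure A := by
  have hb := LinearMap.hasBasis_weakBilin (topDualPairing ℝ ell1).flip
  refine (mem_closure_iff_nhds_basis (t := A) hb).mpr ?_
  intro U hU
  obtain ⟨s, r, hr, rfl⟩ := (topDualPairing ℝ ell1).flip.toSeminormFamily.basisSets_iff.mp hU
  obtain ⟨m, n, hmn, hg⟩ := pigeonhole s hr
  refine ⟨φp m n, (mem_A_iff _).mpr ⟨m, n, hmn, rfl⟩, ?_⟩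
  refine (Seminorm.mem_ball_zero (p := s.sup (topDualPairing ℝ ell1).flip.toSeminormFamily)).mpr ?_
  refine Seminorm.finset_sup_apply_lt hr (fun g hg' => ?_)
  show ‖(topDualPairing ℝ ell1).flip (φp m n) g‖ < r
  have hval : (topDualPairing ℝ ell1).flip (φp m n) g = g ((2:ℝ)⁻¹ • (e m - e n)) := rfl
  rw [hval, map_smul, map_sub]
  have := hg g hg'
  rw [norm_smul]
  calc ‖(2:ℝ)⁻¹‖ * ‖g (e m) - g (e n)‖ ≤ 1 * ‖g (e m) - g (e n)‖ := by
        apply mul_le_mul_of_nonneg_right _ (norm_nonneg _)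
        rw [Real.norm_eq_abs, abs_of_pos (by norm_num : (0:ℝ) < 2⁻¹)]
        norm_num
    _ < r := by rw [one_mul]; exact this
lemma exists_indicator (S : Set (ℕ × ℕ)) (hS : S.Infinite) (hlt : ∀ p ∈ S, p.1 < p.2) :
    ∃ B : Set ℕ, {p | p ∈ S ∧ p.1 ∈ B ∧ p.2 ∉ B}.Infinite := by
  classical
  by_cases hfib : ∃ m, {p | p ∈ S ∧ p.1 = m}.Infinite
  · obtain ⟨m₀, hm₀⟩ := hfib
    refine ⟨{m₀}, hm₀.mono ?_⟩
    rintro p ⟨hpS, hp1⟩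
    refine ⟨hpS, hp1, ?_⟩
    have := hlt p hpS
    simp only [Set.mem_singleton_iff]
    omega
  · push_neg at hfib
    have hfst : (Prod.fst '' S).Infinite := by
      intro hfin
      apply hS
      have : S ⊆ ⋃ m ∈ Prod.fst '' S, {p | p ∈ S ∧ p.1 = m} := by
        intro p hp
        exact Set.mem_biUnion ⟨p, hp, rfl⟩ ⟨hp, rfl⟩
      exact (hfin.biUnion (fun m _ => hfib m)).subset this
    have hpart : ∀ m : ℕ, ∃ p : ℕ × ℕ, m ∈ Prod.fst '' S → (p ∈ S ∧ p.1 = m) := by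
      intro m
      by_cases h : m ∈ Prod.fst '' S
      · obtain ⟨p, hp, hpm⟩ := h
        exact ⟨p, fun _ => ⟨hp, hpm⟩⟩
      · exact ⟨(0, 0), fun hh => absurd hh h⟩
    choose part hpart' using hpart
    have hgt : ∀ b : ℕ, ∃ t, t ∈ Prod.fst '' S ∧ b < t := by
      intro b
      obtain ⟨t, ht, h⟩ := hfst.exists_gt b
      exact ⟨t, ht, h⟩
    let f : ℕ → ℕ := fun k => Nat.rec (Classical.choose (hgt 0))
      (fun _ prev => Classical.choose (hgt (max prev (part prev).2))) k
    have hf0 : ∀ k, f k ∈ Prod.fst '' S := by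
      intro k
      cases k with
      | zero => exact (Classical.choose_spec (hgt 0)).1
      | succ k => exact (Classical.choose_spec (hgt _)).1
    have hfs : ∀ k, max (f k) ((part (f k)).2) < f (k + 1) := fun k =>
      (Classical.choose_spec (hgt (max (f k) (part (f k)).2))).2
    have hmono : StrictMono f := strictMono_nat_of_lt_succ fun k =>
      lt_of_le_of_lt (le_max_left _ _) (hfs k)
    refine ⟨Set.range f, ?_⟩
    have hmem : ∀ k, part (f k) ∈ {p | p ∈ S ∧ p.1 ∈ Set.range f ∧ p.2 ∉ Set.range f} := by
      intro k
      obtain ⟨hpS, hp1⟩ := hpart' (f k) (hf0 k)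
      refine ⟨hpS, ⟨k, hp1.symm⟩, ?_⟩
      rintro ⟨j, hj⟩
      have h2 : f k < (part (f k)).2 := by have := hlt _ hpS; omega
      have h3 : (part (f k)).2 < f (k + 1) := lt_of_le_of_lt (le_max_right _ _) (hfs k)
      rcases lt_or_ge j (k + 1) with hcase | hcase
      · have : f j ≤ f k := hmono.monotone (by omega)
        omega
      · have : f (k + 1) ≤ f j := hmono.monotone hcase
        omega
    have hinj : Function.Injective fun k => part (f k) := by
      intro a b hab
      have ha := (hpart' (f a) (hf0 a)).2
      have hb := (hpart' (f b) (hf0 b)).2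
      simp only at hab
      have : f a = f b := by rw [← ha, ← hb, hab]
      exact hmono.injective this
    exact Set.infinite_of_injective_forall_mem hinj hmem
lemma indicator_bd (B : Set ℕ) : ∀ k, |Set.indicator B (fun _ => (1:ℝ)) k| ≤ 1 := by
  intro k
  by_cases h : k ∈ B
  · rw [Set.indicator_of_mem h]; norm_num
  · rw [Set.indicator_of_notMem h]; norm_num

lemma compact_subset_finite (C : Set (WeakSpace ℝ ell1)) (hC : C ⊆ A ∪ {0})
    (hK : IsCompact C) : C.Finite := by
  classical
  by_contra hinf
  have hinf' : C.Infinite := hinf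
  set S : Set (ℕ × ℕ) := {p | p.1 < p.2 ∧ φp p.1 p.2 ∈ C} with hSdef
  have hSlt : ∀ p ∈ S, p.1 < p.2 := fun p hp => hp.1
  have hSinf : S.Infinite := by
    by_contra hSfin
    rw [Set.not_infinite] at hSfin
    apply hinf
    have hsub : C ⊆ ((fun p : ℕ × ℕ => φp p.1 p.2) '' S) ∪ {0} := by
      intro y hy
      rcases hC hy with hyA | hy0
      · obtain ⟨m, n, hmn, rfl⟩ := (mem_A_iff y).mp hyA
        exact Or.inl ⟨(m, n), ⟨hmn, hy⟩, rfl⟩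
      · exact Or.inr hy0
    exact ((hSfin.image _).union (Set.finite_singleton _)).subset hsub
  obtain ⟨B, hB⟩ := exists_indicator S hSinf hSlt
  set cB : ℕ → ℝ := Set.indicator B (fun _ => (1:ℝ)) with hcBdef
  set U : Set (WeakSpace ℝ ell1) :=
    {y | F cB (indicator_bd B) ((toWeakSpace ℝ ell1).symm y) < 2⁻¹} with hUdef
  have hUopen : IsOpen U := isOpen_lt (Fw_continuous _) continuous_const
  set V : ℕ × ℕ → Set (WeakSpace ℝ ell1) := fun p =>
    {y | 2⁻¹ < F (fun j => sfun p.1 j - sfun p.2 j) (sfun_sub_bd p.1 p.2)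
      ((toWeakSpace ℝ ell1).symm y)} with hVdef
  have hVopen : ∀ p, IsOpen (V p) := fun p => isOpen_lt continuous_const (Fw_continuous _)
  have hφV : ∀ m n : ℕ, m ≠ n → φp m n ∈ V (m, n) := by
    intro m n hne
    show (2:ℝ)⁻¹ < F _ _ ((toWeakSpace ℝ ell1).symm (φp m n))
    rw [symm_φp, F_pair]
    unfold sfun
    rw [if_pos rfl, if_neg hne, if_neg hne.symm, if_pos rfl]
    norm_num
  have hcover : C ⊆ ⋃ p : ℕ × ℕ, (V p ∪ U) := by
    intro y hy
    rcases hC hy with hyA | hy0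
    · obtain ⟨m, n, hmn, rfl⟩ := (mem_A_iff y).mp hyA
      exact Set.mem_iUnion.mpr ⟨(m, n), Or.inl (hφV m n hmn.ne)⟩
    · refine Set.mem_iUnion.mpr ⟨(0, 1), Or.inr ?_⟩
      show F cB (indicator_bd B) ((toWeakSpace ℝ ell1).symm y) < 2⁻¹
      rw [Set.eq_of_mem_singleton hy0, map_zero, map_zero]
      norm_num
  obtain ⟨t, ht⟩ := hK.elim_finite_subcover (fun p => V p ∪ U)
    (fun p => (hVopen p).union hUopen) hcover
  apply hB
  refine Set.Finite.subset t.finite_toSet ?_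
  rintro q ⟨hqS, hq1, hq2⟩
  have hyC : φp q.1 q.2 ∈ C := hqS.2
  have hval : F cB (indicator_bd B) ((toWeakSpace ℝ ell1).symm (φp q.1 q.2)) = 2⁻¹ := by
    rw [symm_φp, F_pair, hcBdef, Set.indicator_of_mem hq1, Set.indicator_of_notMem hq2]
    norm_num
  have hyU : φp q.1 q.2 ∉ U := by
    intro hmem
    rw [hUdef] at hmem
    have : F cB (indicator_bd B) ((toWeakSpace ℝ ell1).symm (φp q.1 q.2)) < 2⁻¹ := hmem
    rw [hval] at this
    norm_num at this
  have := ht hyC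
  rw [Set.mem_iUnion₂] at this
  obtain ⟨p, hpt, hyp⟩ := this
  rcases hyp with hyV | hyU'
  · -- q = p
    have hval2 : (2:ℝ)⁻¹ < 2⁻¹ * ((sfun p.1 q.1 - sfun p.2 q.1) - (sfun p.1 q.2 - sfun p.2 q.2)) := by
      have : φp q.1 q.2 ∈ V p := hyV
      rw [hVdef] at this
      have h2 := this
      show (2:ℝ)⁻¹ < _
      rw [← F_pair (fun j => sfun p.1 j - sfun p.2 j) (sfun_sub_bd p.1 p.2) q.1 q.2, ← symm_φp]
      exact h2
    have hqlt := hqS.1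
    have hqp : q = p := by
      unfold sfun at hval2
      split_ifs at hval2 with h1 h2 h3 h4 h3 h4 h4 h4 <;>
        first
          | (exact Prod.ext h1 ‹q.2 = p.2›)
          | (exfalso; norm_num at hval2)
    rw [hqp]; exact hpt
  · exact absurd hyU' hyU

theorem stmt_12 :
    closure A = A ∪ {0} ∧
      ∀ C : Set (WeakSpace ℝ ell1), C ⊆ A ∪ {0} → IsCompact C → C.Finite := by
  constructor
  · refine Set.Subset.antisymm closure_A_subset (Set.union_subset subset_closure ?_)
    exact Set.singleton_subset_iff.mpr zero_mem_closure_A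
  · exact compact_subset_finite
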